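/- In the group G₁ = ℤ² ⋊ C₂ = ⟨a, b, t | [a,b] = 1, t² = 1, tat = b⟩ with symmetric generating set {a, a⁻¹, t}, the number of geodesic words of length exactly n is 2n² − 2n for all n ≥ 5; in particular G₁ has polynomial geodesic growth (of degree 3 cumulatively) with respect to this generating set. -/

import Mathlib

/-- A word `w` over the alphabet `X ⊆ G` is geodesic if its letters lie in `X` and no
shorter word over `X` represents the same element of `G`. -/
def IsGeodesicWord {G : Type*} [Group G] (X : Set G) (w : List G) : Prop :=
  (∀ a ∈ w, a ∈ X) ∧
    ∀ w' : List G, (∀ a ∈ w', a ∈ X) → w'.prod = w.prod → w.length ≤ w'.length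

/-- The geodesic growth function: the number of geodesic words over `X` of length at most `n`. -/
noncomputable def geodesicGrowth {G : Type*} [Group G] (X : Set G) (n : ℕ) : ℕ :=
  Set.ncard {w : List G | IsGeodesicWord X w ∧ w.length ≤ n}

/-- The word growth function: the number of elements of `G` represented by some word over `X`
of length at most `n`. -/
noncomputable def wordGrowth {G : Type*} [Group G] (X : Set G) (n : ℕ) : ℕ :=
  Set.ncard {g : G | ∃ w : List G, (∀ a ∈ w, a ∈ X) ∧ w.prod = g ∧ w.length ≤ n}

namespace GeoG1

inductive L3 : Type
  | A : L3
  | A' : L3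
  | T : L3
  deriving DecidableEq

open L3

def nf3 : List L3 → ℤ × ℤ × Bool
  | [] => (0, 0, false)
  | (A :: w) => ((nf3 w).1 + 1, (nf3 w).2.1, (nf3 w).2.2)
  | (A' :: w) => ((nf3 w).1 - 1, (nf3 w).2.1, (nf3 w).2.2)
  | (T :: w) => ((nf3 w).2.1, (nf3 w).1, !(nf3 w).2.2)

def glen (p : ℤ × ℤ × Bool) : ℕ :=
  if p.2.2 then p.1.natAbs + p.2.1.natAbs + 1
  else if p.2.1 = 0 then p.1.natAbs else p.1.natAbs + p.2.1.natAbs + 2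

def blk (x : ℤ) : List L3 := List.replicate x.natAbs (if 0 ≤ x then A else A')

def w2 (p : ℤ × ℤ) : List L3 := blk p.1 ++ T :: blk p.2

def w3 (p : ℤ × ℤ × ℤ) : List L3 := blk p.1 ++ T :: (blk p.2.1 ++ T :: blk p.2.2)

@[simp] lemma length_blk (x : ℤ) : (blk x).length = x.natAbs := by
  simp [blk]

@[simp] lemma countT_blk (x : ℤ) : (blk x).count T = 0 := by
  simp [blk, List.count_replicate]
  split <;> simp

lemma abs_bound : ∀ w : List L3,
    (nf3 w).1.natAbs + (nf3 w).2.1.natAbs + w.count T ≤ w.length := by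
  intro w
  induction w with
  | nil => simp [nf3]
  | cons c w ih =>
    cases c <;> simp [nf3, List.count_cons] at * <;> omega

lemma noT_nf : ∀ w : List L3, w.count T = 0 →
    (nf3 w).2.1 = 0 ∧ (nf3 w).2.2 = false := by
  intro w
  induction w with
  | nil => simp [nf3]
  | cons c w ih =>
    intro h
    cases c <;> simp [nf3, List.count_cons] at h ⊢ <;>
      first
        | exact ih h
        | exact absurd h (by omega)

lemma nf3_append_noT (u : List L3) (r : List L3) (hu : u.count T = 0) :
    nf3 (u ++ r) = ((nf3 u).1 + (nf3 r).1, (nf3 r).2.1, (nf3 r).2.2) := by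
  induction u with
  | nil => simp [nf3]
  | cons c u ih =>
    cases c <;> simp [nf3, List.count_cons] at hu ⊢ <;>
      rw [ih hu] <;> simp <;> ring

lemma nf3_replicate_A (m : ℕ) : nf3 (List.replicate m A) = ((m : ℤ), 0, false) := by
  induction m with
  | zero => simp [nf3]
  | succ m ih => simp [List.replicate_succ, nf3, ih]

lemma nf3_replicate_A' (m : ℕ) : nf3 (List.replicate m A') = (-(m : ℤ), 0, false) := by
  induction m with
  | zero => simp [nf3]
  | succ m ih => simp [List.replicate_succ, nf3, ih]; push_cast; ring

@[simp] lemma nf3_blk (x : ℤ) : nf3 (blk x) = (x, 0, false) := by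
  unfold blk
  by_cases h : 0 ≤ x
  · rw [if_pos h, nf3_replicate_A]
    congr 1
    omega
  · rw [if_neg h, nf3_replicate_A']
    congr 1
    omega

@[simp] lemma nf3_w2 (p : ℤ × ℤ) : nf3 (w2 p) = (p.1, p.2, true) := by
  unfold w2
  rw [nf3_append_noT _ _ (countT_blk _)]
  simp [nf3]

@[simp] lemma nf3_w3 (p : ℤ × ℤ × ℤ) : nf3 (w3 p) = (p.1 + p.2.2, p.2.1, false) := by
  unfold w3
  rw [nf3_append_noT _ _ (countT_blk _)]
  show (_ + (nf3 (T :: (blk p.2.1 ++ T :: blk p.2.2))).1, _, _) = _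
  rw [show nf3 (T :: (blk p.2.1 ++ T :: blk p.2.2))
      = ((nf3 (blk p.2.1 ++ T :: blk p.2.2)).2.1, (nf3 (blk p.2.1 ++ T :: blk p.2.2)).1,
        !(nf3 (blk p.2.1 ++ T :: blk p.2.2)).2.2) from rfl]
  rw [nf3_append_noT _ _ (countT_blk _)]
  simp [nf3]

lemma blk_succ (x : ℤ) (h : 0 ≤ x) : blk (x + 1) = A :: blk x := by
  unfold blk
  rw [if_pos (by omega : (0:ℤ) ≤ x + 1), if_pos h,
    show (x+1).natAbs = x.natAbs + 1 by omega, List.replicate_succ]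

lemma blk_pred (x : ℤ) (h : x ≤ 0) : blk (x - 1) = A' :: blk x := by
  unfold blk
  rw [if_neg (by omega : ¬ (0:ℤ) ≤ x - 1), show (x-1).natAbs = x.natAbs + 1 by omega,
    List.replicate_succ]
  rcases eq_or_lt_of_le h with h0 | h0
  · subst h0; simp
  · rw [if_neg (by omega)]

lemma noT_eq : ∀ w : List L3, w.count T = 0 → w.length = (nf3 w).1.natAbs →
    w = blk (nf3 w).1 := by
  intro w
  induction w with
  | nil => intro _ _; rfl
  | cons c w ih =>
    intro hT hl
    have hb := abs_bound w
    cases c with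
    | A =>
      simp [List.count_cons] at hT
      simp only [nf3, List.length_cons] at hl hb ⊢
      have h1 : 0 ≤ (nf3 w).1 := by omega
      have h2 : w.length = (nf3 w).1.natAbs := by omega
      rw [blk_succ _ h1, ← ih hT h2]
    | A' =>
      simp [List.count_cons] at hT
      simp only [nf3, List.length_cons] at hl hb ⊢
      have h1 : (nf3 w).1 ≤ 0 := by omega
      have h2 : w.length = (nf3 w).1.natAbs := by omega
      rw [blk_pred _ h1, ← ih hT h2]
    | T => simp [List.count_cons] at hT

lemma split_T : ∀ w : List L3, w.count T ≠ 0 →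
    ∃ u v, w = u ++ T :: v ∧ u.count T = 0 ∧ v.count T = w.count T - 1 := by
  intro w
  induction w with
  | nil => simp
  | cons c w ih =>
    intro h
    cases c with
    | T => exact ⟨[], w, rfl, by simp, by simp [List.count_cons]⟩
    | A =>
      simp [List.count_cons] at h
      obtain ⟨u, v, rfl, hu, hv⟩ := ih h
      exact ⟨A :: u, v, rfl, by simpa using hu, by simpa [List.count_cons] using hv⟩
    | A' =>
      simp [List.count_cons] at h
      obtain ⟨u, v, rfl, hu, hv⟩ := ih h
      exact ⟨A' :: u, v, rfl, by simpa using hu, by simpa [List.count_cons] using hv⟩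

lemma cancel_T : ∀ u u' r r' : List L3, u.count T = 0 → u'.count T = 0 →
    u ++ T :: r = u' ++ T :: r' → u = u' ∧ r = r' := by
  intro u
  induction u with
  | nil =>
    intro u' r r' _ hu' h
    cases u' with
    | nil => simpa using h
    | cons c u' =>
      simp at h
      rw [← h.1] at hu'
      simp [List.count_cons] at hu'
  | cons c u ih =>
    intro u' r r' hu hu' h
    cases u' with
    | nil =>
      simp at h
      rw [h.1] at hu
      simp [List.count_cons] at hu
    | cons c' u'' =>
      simp at h
      obtain ⟨h1, h2⟩ := h
      rw [List.count_cons] at hu hu'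
      have := ih u'' r r' (by omega) (by omega) h2
      exact ⟨by rw [h1, this.1], this.2⟩

@[simp] lemma nf3_nil : nf3 [] = (0,0,false) := rfl
@[simp] lemma nf3_cons_A (w) : nf3 (A :: w) = ((nf3 w).1 + 1, (nf3 w).2.1, (nf3 w).2.2) := rfl
@[simp] lemma nf3_cons_A' (w) : nf3 (A' :: w) = ((nf3 w).1 - 1, (nf3 w).2.1, (nf3 w).2.2) := rfl
@[simp] lemma nf3_cons_T (w) : nf3 (T :: w) = ((nf3 w).2.1, (nf3 w).1, !(nf3 w).2.2) := rfl

lemma glen_le (p : ℤ × ℤ × Bool) : glen p ≤ p.1.natAbs + p.2.1.natAbs + 2 := by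
  unfold glen
  split
  · omega
  · split <;> omega

@[simp] lemma glen_true (i j : ℤ) : glen (i, j, true) = i.natAbs + j.natAbs + 1 := rfl

lemma glen_false (i j : ℤ) :
    glen (i, j, false) = if j = 0 then i.natAbs else i.natAbs + j.natAbs + 2 := rfl

@[simp] lemma length_w2 (p : ℤ × ℤ) : (w2 p).length = p.1.natAbs + p.2.natAbs + 1 := by
  simp [w2]; omega

@[simp] lemma length_w3 (p : ℤ × ℤ × ℤ) :
    (w3 p).length = p.1.natAbs + p.2.1.natAbs + p.2.2.natAbs + 2 := by
  simp [w3]; omega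

lemma eps_of_one (w : List L3) (h : w.count T = 1) : (nf3 w).2.2 = true := by
  obtain ⟨u, v, rfl, hu, hv⟩ := split_T w (by omega)
  rw [h] at hv
  have hv' : v.count T = 0 := by omega
  rw [nf3_append_noT _ _ hu]
  simp [(noT_nf v hv').2]

lemma glen_lower (w : List L3) : glen (nf3 w) ≤ w.length := by
  have hb := abs_bound w
  obtain h | h | h : w.count T = 0 ∨ w.count T = 1 ∨ 2 ≤ w.count T := by omega
  · obtain ⟨hj, he⟩ := noT_nf w h
    unfold glen
    rw [he, if_neg (by simp), hj, if_pos rfl]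
    omega
  · unfold glen
    rw [eps_of_one w h, if_pos rfl]
    omega
  · calc glen (nf3 w) ≤ _ + 2 := glen_le _
      _ ≤ w.length := by omega

noncomputable def P1 (n : ℕ) : Finset ℤ := (Finset.Icc (-(n:ℤ)) n).filter (fun x => x.natAbs = n)

noncomputable def P2 (n : ℕ) : Finset (ℤ × ℤ) :=
  ((Finset.Icc (-(n:ℤ)) n) ×ˢ (Finset.Icc (-(n:ℤ)) n)).filter
    (fun p => p.1.natAbs + p.2.natAbs + 1 = n)

noncomputable def P3 (n : ℕ) : Finset (ℤ × ℤ × ℤ) :=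
  ((Finset.Icc (-(n:ℤ)) n) ×ˢ ((Finset.Icc (-(n:ℤ)) n) ×ˢ (Finset.Icc (-(n:ℤ)) n))).filter
    (fun p => p.1.natAbs + p.2.1.natAbs + p.2.2.natAbs + 2 = n ∧ p.2.1 ≠ 0 ∧ 0 ≤ p.1 * p.2.2)

noncomputable def GeoF (n : ℕ) : Finset (List L3) :=
  ((P1 n).image blk ∪ (P2 n).image w2) ∪ (P3 n).image w3

lemma GeoF_spec (n : ℕ) (w : List L3) (h : w ∈ GeoF n) :
    w.length = n ∧ w.length = glen (nf3 w) := by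
  simp only [GeoF, Finset.mem_union, Finset.mem_image] at h
  rcases h with (⟨x, hx, rfl⟩ | ⟨p, hp, rfl⟩) | ⟨p, hp, rfl⟩
  · simp only [P1, Finset.mem_filter] at hx
    rw [nf3_blk, glen_false, if_pos rfl]
    simp [hx.2]
  · simp only [P2, Finset.mem_filter] at hp
    rw [nf3_w2, glen_true]
    simp [hp.2]
  · simp only [P3, Finset.mem_filter] at hp
    obtain ⟨-, hsum, hy, hxz⟩ := hp
    rw [nf3_w3, glen_false, if_neg hy]
    rw [mul_nonneg_iff] at hxz
    constructor
    · simp [hsum]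
    · simp only [length_w3]
      omega

lemma mem_GeoF_of (w : List L3) (h : w.length = glen (nf3 w)) : w ∈ GeoF w.length := by
  have hb := abs_bound w
  simp only [GeoF, Finset.mem_union, Finset.mem_image]
  obtain hT | hT | hT | hT : w.count T = 0 ∨ w.count T = 1 ∨ w.count T = 2 ∨ 3 ≤ w.count T := by
    omega
  rotate_right
  · exfalso
    have := glen_le (nf3 w)
    omega
  rotate_right 3
  · -- zero t's
    obtain ⟨hj, he⟩ := noT_nf w hT
    have hg : glen (nf3 w) = (nf3 w).1.natAbs := by
      rw [show nf3 w = ((nf3 w).1, (nf3 w).2.1, (nf3 w).2.2) from rfl, hj, he, glen_false,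
        if_pos rfl]
    rw [hg] at h
    left; left
    refine ⟨(nf3 w).1, ?_, (noT_eq w hT h).symm⟩
    simp only [P1, Finset.mem_filter, Finset.mem_Icc]
    omega
  · -- one t
    obtain ⟨u, v, rfl, hu, hv⟩ := split_T w (by omega)
    rw [hT] at hv
    have hv' : v.count T = 0 := by omega
    have h2 := noT_nf v hv' 
    have hnf : nf3 (u ++ T :: v) = ((nf3 u).1, (nf3 v).1, true) := by
      rw [nf3_append_noT _ _ hu, nf3_cons_T, h2.1, h2.2]
      simp
    rw [hnf, glen_true] at h
    simp only [List.length_append, List.length_cons] at h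
    have hbu := abs_bound u
    have hbv := abs_bound v
    have hlu : u.length = (nf3 u).1.natAbs := by omega
    have hlv : v.length = (nf3 v).1.natAbs := by omega
    left; right
    refine ⟨((nf3 u).1, (nf3 v).1), ?_, ?_⟩
    · simp only [P2, Finset.mem_filter, Finset.mem_product, Finset.mem_Icc,
        List.length_append, List.length_cons]
      omega
    · rw [w2, ← noT_eq u hu hlu, ← noT_eq v hv' hlv]
  · -- two t's
    obtain ⟨u, v, rfl, hu, hv⟩ := split_T w (by omega)
    rw [hT] at hv
    obtain ⟨v1, v2, rfl, hv1, hv2⟩ := split_T v (by omega)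
    rw [hv] at hv2
    have hv2' : v2.count T = 0 := by omega
    have h2 := noT_nf v2 hv2'
    have hnf : nf3 (u ++ T :: (v1 ++ T :: v2))
        = ((nf3 u).1 + (nf3 v2).1, (nf3 v1).1, false) := by
      rw [nf3_append_noT _ _ hu, nf3_cons_T, nf3_append_noT _ _ hv1, nf3_cons_T, h2.1, h2.2]
      simp
    have hbu := abs_bound u
    have hb1 := abs_bound v1
    have hb2 := abs_bound v2
    have habs := Int.natAbs_add_le (nf3 u).1 (nf3 v2).1
    rw [hnf, glen_false] at h
    simp only [List.length_append, List.length_cons] at h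
    by_cases hs1 : (nf3 v1).1 = 0
    · exfalso
      rw [if_pos hs1] at h
      omega
    rw [if_neg hs1] at h
    have hlu : u.length = (nf3 u).1.natAbs := by omega
    have hl1 : v1.length = (nf3 v1).1.natAbs := by omega
    have hl2 : v2.length = (nf3 v2).1.natAbs := by omega
    right
    refine ⟨((nf3 u).1, (nf3 v1).1, (nf3 v2).1), ?_, ?_⟩
    · simp only [P3, Finset.mem_filter, Finset.mem_product, Finset.mem_Icc,
        List.length_append, List.length_cons]
      refine ⟨⟨by omega, by omega, by omega⟩, by omega, hs1, ?_⟩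
      rw [mul_nonneg_iff]
      omega
    · rw [w3, ← noT_eq u hu hlu, ← noT_eq v1 hv1 hl1, ← noT_eq v2 hv2' hl2]

-- Counting lemmas
lemma card_P1 (n : ℕ) (hn : 1 ≤ n) : (P1 n).card = 2 := by
  have h : P1 n = {(n : ℤ), -(n : ℤ)} := by
    ext x
    simp only [P1, Finset.mem_filter, Finset.mem_Icc, Finset.mem_insert, Finset.mem_singleton]
    omega
  rw [h, Finset.card_insert_of_notMem (by simp only [Finset.mem_singleton]; omega),
    Finset.card_singleton]

lemma card_pair {α : Type*} [DecidableEq α] {x y : α} (h : x ≠ y) :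
    ({x, y} : Finset α).card = 2 := by
  rw [Finset.card_insert_of_notMem (by simpa using h), Finset.card_singleton]

lemma card_P2 (m : ℕ) (hm : 1 ≤ m) : (P2 (m + 1)).card = 4 * m := by
  classical
  rw [Finset.card_eq_sum_card_fiberwise (f := fun p => p.1) (t := Finset.Icc (-(m:ℤ)) m)
    (fun p hp => by
      simp only [Finset.mem_coe, P2, Finset.mem_filter, Finset.mem_product, Finset.mem_Icc] at hp
      simp only [Finset.mem_coe, Finset.mem_Icc]
      omega)]
  have hfib : ∀ x ∈ Finset.Icc (-(m:ℤ)) m,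
      ((P2 (m+1)).filter (fun p => p.1 = x)).card = if x.natAbs = m then 1 else 2 := by
    intro x hx
    simp only [Finset.mem_Icc] at hx
    by_cases h : x.natAbs = m
    · rw [if_pos h]
      have hset : (P2 (m+1)).filter (fun p => p.1 = x) = {(x, 0)} := by
        ext ⟨p1, p2⟩
        simp only [P2, Finset.mem_filter, Finset.mem_product, Finset.mem_Icc,
          Finset.mem_singleton, Prod.mk.injEq]
        omega
      rw [hset, Finset.card_singleton]
    · rw [if_neg h]
      have hset : (P2 (m+1)).filter (fun p => p.1 = x)
          = {(x, (m : ℤ) - x.natAbs), (x, -((m : ℤ) - x.natAbs))} := by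
        ext ⟨p1, p2⟩
        simp only [P2, Finset.mem_filter, Finset.mem_product, Finset.mem_Icc,
          Finset.mem_insert, Finset.mem_singleton, Prod.mk.injEq]
        omega
      rw [hset, card_pair (by simp only [ne_eq, Prod.mk.injEq, true_and]; omega)]
  rw [Finset.sum_congr rfl hfib]
  rw [Finset.sum_ite, Finset.sum_const, Finset.sum_const]
  have h1 : ((Finset.Icc (-(m:ℤ)) m).filter (fun x => x.natAbs = m)).card = 2 :=
    card_P1 m hm
  have h2 : ((Finset.Icc (-(m:ℤ)) m).filter (fun x => ¬ x.natAbs = m)).card = 2 * m - 1 := by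
    have h3 := Finset.card_filter_add_card_filter_not
      (s := Finset.Icc (-(m:ℤ)) m) (p := fun x => x.natAbs = m)
    have h4 : (Finset.Icc (-(m:ℤ)) m).card = 2 * m + 1 := by
      rw [Int.card_Icc]
      omega
    omega
  rw [h1, h2]
  simp only [smul_eq_mul]
  omega

noncomputable def Q (r : ℕ) : Finset (ℤ × ℤ) :=
  ((Finset.Icc (-(r:ℤ)) r) ×ˢ (Finset.Icc (-(r:ℤ)) r)).filter
    (fun p => p.1.natAbs + p.2.natAbs = r ∧ 0 ≤ p.1 * p.2)

lemma card_Q (r : ℕ) : (Q r).card = if r = 0 then 1 else 2 * r + 2 := by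
  classical
  rw [Finset.card_eq_sum_card_fiberwise (f := fun p => p.1) (t := Finset.Icc (-(r:ℤ)) r)
    (fun p hp => by
      simp only [Finset.mem_coe, Q, Finset.mem_filter, Finset.mem_product, Finset.mem_Icc] at hp
      simp only [Finset.mem_coe, Finset.mem_Icc]
      omega)]
  have hfib : ∀ x ∈ Finset.Icc (-(r:ℤ)) r,
      ((Q r).filter (fun p => p.1 = x)).card
        = if x = 0 then (if r = 0 then 1 else 2) else 1 := by
    intro x hx
    simp only [Finset.mem_Icc] at hx
    by_cases h0 : x = 0
    · subst h0
      rw [if_pos rfl]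
      by_cases hr : r = 0
      · subst hr
        rw [if_pos rfl]
        have hset : (Q 0).filter (fun p => p.1 = 0) = {((0:ℤ), (0:ℤ))} := by
          ext ⟨p1, p2⟩
          simp only [Q, Finset.mem_filter, Finset.mem_product, Finset.mem_Icc,
            Finset.mem_singleton, Prod.mk.injEq]
          rw [mul_nonneg_iff]
          omega
        rw [hset, Finset.card_singleton]
      · rw [if_neg hr]
        have hset : (Q r).filter (fun p => p.1 = 0) = {((0:ℤ), (r:ℤ)), ((0:ℤ), -(r:ℤ))} := by
          ext ⟨p1, p2⟩
          simp only [Q, Finset.mem_filter, Finset.mem_product, Finset.mem_Icc,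
            Finset.mem_insert, Finset.mem_singleton, Prod.mk.injEq]
          rw [mul_nonneg_iff]
          omega
        rw [hset, card_pair (by simp only [ne_eq, Prod.mk.injEq, true_and]; omega)]
    · rw [if_neg h0]
      have hset : (Q r).filter (fun p => p.1 = x)
          = {(x, if 0 ≤ x then (r:ℤ) - x else -((r:ℤ) + x))} := by
        ext ⟨p1, p2⟩
        simp only [Q, Finset.mem_filter, Finset.mem_product, Finset.mem_Icc,
          Finset.mem_singleton, Prod.mk.injEq]
        rw [mul_nonneg_iff]
        split_ifs <;> omega
      rw [hset, Finset.card_singleton]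
  rw [Finset.sum_congr rfl hfib]
  rw [Finset.sum_ite, Finset.sum_const, Finset.sum_const]
  have h1 : ((Finset.Icc (-(r:ℤ)) r).filter (fun x => x = 0)).card = 1 := by
    have hset : (Finset.Icc (-(r:ℤ)) r).filter (fun x => x = 0) = {(0:ℤ)} := by
      ext x
      simp only [Finset.mem_filter, Finset.mem_Icc, Finset.mem_singleton]
      omega
    rw [hset, Finset.card_singleton]
  have h2 : ((Finset.Icc (-(r:ℤ)) r).filter (fun x => ¬ x = 0)).card = 2 * r := by
    have h3 := Finset.card_filter_add_card_filter_not
      (s := Finset.Icc (-(r:ℤ)) r) (p := fun x => x = 0)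
    have h4 : (Finset.Icc (-(r:ℤ)) r).card = 2 * r + 1 := by
      rw [Int.card_Icc]
      omega
    omega
  rw [h1, h2]
  simp only [smul_eq_mul]
  by_cases hr : r = 0
  · subst hr; simp
  · rw [if_neg hr, if_neg hr]
    omega

lemma sum_Icc_symm (f : ℤ → ℕ) (hf : ∀ y : ℤ, f (-y) = f y) :
    ∀ m : ℕ, (∑ y ∈ Finset.Icc (-(m:ℤ)) m, f y)
      = f 0 + 2 * ∑ q ∈ Finset.Icc 1 m, f (q : ℤ)
  | 0 => by simp
  | (m+1) => by
    have hs : Finset.Icc (-((m+1 : ℕ):ℤ)) ((m+1 : ℕ):ℤ)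
        = insert (-((m+1 : ℕ):ℤ)) (insert (((m+1 : ℕ):ℤ)) (Finset.Icc (-(m:ℤ)) m)) := by
      ext x
      simp only [Finset.mem_Icc, Finset.mem_insert]
      push_cast
      omega
    rw [hs, Finset.sum_insert (by
        simp only [Finset.mem_insert, Finset.mem_Icc]
        push_cast
        omega),
      Finset.sum_insert (by
        simp only [Finset.mem_Icc]
        push_cast
        omega),
      sum_Icc_symm f hf m, Finset.sum_Icc_succ_top (by omega : 1 ≤ m + 1)]
    have he : f (-((m+1 : ℕ):ℤ)) = f (((m+1 : ℕ):ℤ)) := hf _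
    push_cast at he ⊢
    omega

noncomputable def F3 (m : ℕ) (y : ℤ) : ℕ := if y = 0 then 0 else (Q (m - y.natAbs)).card

lemma sum_range_g (m : ℕ) (hm : 1 ≤ m) :
    (∑ r ∈ Finset.range m, (if r = 0 then 1 else 2 * r + 2)) = m * m + m - 1 := by
  induction m with
  | zero => omega
  | succ m ih =>
    rcases Nat.eq_or_lt_of_le hm with h1 | h1
    · simp [← h1]
    · have hm1 : 1 ≤ m := by omega
      rw [Finset.sum_range_succ, ih hm1, if_neg (by omega)]
      have h : (m+1) * (m+1) = m * m + 2 * m + 1 := by ring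
      rw [h]
      have h2 : 1 ≤ m * m := Nat.one_le_iff_ne_zero.mpr (by positivity)
      generalize m * m = k at *
      omega

lemma card_P3 (m : ℕ) (hm : 1 ≤ m) : (P3 (m + 2)).card = 2 * (m * m + m - 1) := by
  classical
  rw [Finset.card_eq_sum_card_fiberwise (f := fun p => p.2.1) (t := Finset.Icc (-(m:ℤ)) m)
    (fun p hp => by
      simp only [Finset.mem_coe, P3, Finset.mem_filter, Finset.mem_product, Finset.mem_Icc] at hp
      simp only [Finset.mem_coe, Finset.mem_Icc]
      omega)]
  have hfib : ∀ y ∈ Finset.Icc (-(m:ℤ)) m,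
      ((P3 (m+2)).filter (fun p => p.2.1 = y)).card = F3 m y := by
    intro y hy
    simp only [Finset.mem_Icc] at hy
    unfold F3
    by_cases h0 : y = 0
    · subst h0
      rw [if_pos rfl, Finset.card_eq_zero]
      ext ⟨p1, py, p2⟩
      simp only [P3, Finset.mem_filter, Finset.mem_product, Finset.mem_Icc,
        Finset.notMem_empty, iff_false, not_and]
      rintro ⟨-, -, hne, -⟩ rfl
      exact hne rfl
    · rw [if_neg h0]
      have hset : (P3 (m+2)).filter (fun p => p.2.1 = y)
          = (Q (m - y.natAbs)).image (fun q => (q.1, y, q.2)) := by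
        ext ⟨p1, py, p2⟩
        simp only [P3, Q, Finset.mem_filter, Finset.mem_product, Finset.mem_Icc,
          Finset.mem_image, Prod.mk.injEq, Prod.exists]
        constructor
        · rintro ⟨⟨⟨hb1, hby, hb2⟩, hsum, hne, hsgn⟩, rfl⟩
          exact ⟨p1, p2, ⟨⟨by omega, by omega⟩, by omega, hsgn⟩, rfl, rfl, rfl⟩
        · rintro ⟨q1, q2, ⟨⟨hq1, hq2⟩, hqs, hqsgn⟩, rfl, rfl, rfl⟩
          exact ⟨⟨⟨by omega, by omega, by omega⟩, by omega, h0, hqsgn⟩, rfl⟩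
      rw [hset, Finset.card_image_of_injective _ (by
        intro q q' hq
        simp only [Prod.mk.injEq] at hq
        exact Prod.ext hq.1 hq.2.2)]
  rw [Finset.sum_congr rfl hfib]
  rw [sum_Icc_symm (F3 m) (by
      intro y
      unfold F3
      simp only [neg_eq_zero, Int.natAbs_neg]) m]
  have hF0 : F3 m 0 = 0 := by simp [F3]
  have hsum : (∑ q ∈ Finset.Icc 1 m, F3 m (q : ℤ))
      = ∑ q ∈ Finset.Icc 1 m, (Q (m - q)).card := by
    apply Finset.sum_congr rfl
    intro q hq
    simp only [Finset.mem_Icc] at hq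
    unfold F3
    rw [if_neg (show ¬ (q:ℤ) = 0 by exact_mod_cast (by omega : ¬ q = 0))]
    simp only [Int.natAbs_natCast]
  rw [hF0, hsum]
  have hre : (∑ q ∈ Finset.Icc 1 m, (Q (m - q)).card)
      = ∑ r ∈ Finset.range m, (Q r).card := by
    apply Finset.sum_nbij' (i := fun q => m - q) (j := fun r => m - r)
    · intro q hq; simp only [Finset.mem_Icc] at hq; simp only [Finset.mem_range]; omega
    · intro r hr; simp only [Finset.mem_range] at hr; simp only [Finset.mem_Icc]; omega
    · intro q hq; simp only [Finset.mem_Icc] at hq; omega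
    · intro r hr; simp only [Finset.mem_range] at hr; omega
    · intro q hq; rfl
  rw [hre]
  have hg : (∑ r ∈ Finset.range m, (Q r).card)
      = ∑ r ∈ Finset.range m, (if r = 0 then 1 else 2 * r + 2) :=
    Finset.sum_congr rfl (fun r _ => card_Q r)
  rw [hg, sum_range_g m hm]
  omega

lemma blk_inj : Function.Injective blk := by
  intro x x' h
  have h2 := congrArg (fun w => (nf3 w).1) h
  simpa using h2

@[simp] lemma countT_w2 (p : ℤ × ℤ) : (w2 p).count T = 1 := by
  simp [w2, List.count_append, List.count_cons]

@[simp] lemma countT_w3 (p : ℤ × ℤ × ℤ) : (w3 p).count T = 2 := by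
  simp [w3, List.count_append, List.count_cons]

lemma w2_inj : Function.Injective w2 := by
  intro p p' h
  have h2 := congrArg nf3 h
  rw [nf3_w2, nf3_w2] at h2
  simp only [Prod.mk.injEq] at h2
  exact Prod.ext h2.1 h2.2.1

lemma w3_inj : Function.Injective w3 := by
  intro p p' h
  unfold w3 at h
  obtain ⟨e1, e2⟩ := cancel_T _ _ _ _ (countT_blk _) (countT_blk _) h
  obtain ⟨e3, e4⟩ := cancel_T _ _ _ _ (countT_blk _) (countT_blk _) e2
  have := blk_inj e1
  have := blk_inj e3
  have := blk_inj e4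
  rcases p with ⟨x, y, z⟩; rcases p' with ⟨x', y', z'⟩
  simp_all

lemma card_GeoF (n : ℕ) :
    (GeoF n).card = (P1 n).card + (P2 n).card + (P3 n).card := by
  have d12 : Disjoint ((P1 n).image blk) ((P2 n).image w2) := by
    rw [Finset.disjoint_left]
    rintro w hw1 hw2
    simp only [Finset.mem_image] at hw1 hw2
    obtain ⟨x, -, rfl⟩ := hw1
    obtain ⟨p, -, hp⟩ := hw2
    have := congrArg (List.count T) hp
    simp at this
  have d3 : Disjoint ((P1 n).image blk ∪ (P2 n).image w2) ((P3 n).image w3) := by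
    rw [Finset.disjoint_left]
    rintro w hw1 hw2
    simp only [Finset.mem_union, Finset.mem_image] at hw1 hw2
    obtain ⟨p, -, rfl⟩ := hw2
    rcases hw1 with ⟨x, -, hp⟩ | ⟨q, -, hp⟩ <;>
      · have := congrArg (List.count T) hp
        simp at this
  rw [GeoF, Finset.card_union_of_disjoint d3, Finset.card_union_of_disjoint d12,
    Finset.card_image_of_injective _ blk_inj, Finset.card_image_of_injective _ w2_inj,
    Finset.card_image_of_injective _ w3_inj]

lemma card_Icc_int (n : ℕ) : (Finset.Icc (-(n:ℤ)) n).card = 2 * n + 1 := by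
  rw [Int.card_Icc]; omega

lemma card_P1_le (n : ℕ) : (P1 n).card ≤ 2 * n + 1 := by
  calc (P1 n).card ≤ (Finset.Icc (-(n:ℤ)) n).card := Finset.card_filter_le _ _
    _ = 2 * n + 1 := card_Icc_int n

lemma card_P2_le (n : ℕ) : (P2 n).card ≤ (2 * n + 1) * (2 * n + 1) := by
  calc (P2 n).card ≤ ((Finset.Icc (-(n:ℤ)) n) ×ˢ (Finset.Icc (-(n:ℤ)) n)).card :=
        Finset.card_filter_le _ _
    _ = (2 * n + 1) * (2 * n + 1) := by rw [Finset.card_product, card_Icc_int]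

lemma card_P3_le (n : ℕ) : (P3 n).card ≤ (2 * n + 1) * (2 * n + 1) * 2 := by
  classical
  have := Finset.card_le_card_of_injOn
    (f := fun p : ℤ × ℤ × ℤ => ((p.1, p.2.1), decide (0 ≤ p.2.2)))
    (s := P3 n)
    (t := ((Finset.Icc (-(n:ℤ)) n) ×ˢ (Finset.Icc (-(n:ℤ)) n)) ×ˢ (Finset.univ : Finset Bool))
    (by
      intro p hp
      simp only [Finset.mem_coe, P3, Finset.mem_filter, Finset.mem_product, Finset.mem_Icc] at hp
      simp only [Finset.mem_coe, Finset.mem_product, Finset.mem_Icc, Finset.mem_univ, and_true]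
      exact ⟨hp.1.1, hp.1.2.1⟩)
    (by
      rintro ⟨x, y, z⟩ hp ⟨x', y', z'⟩ hp' he
      replace hp : (x, y, z) ∈ P3 n := hp
      replace hp' : (x', y', z') ∈ P3 n := hp'
      simp only [P3, Finset.mem_filter, Finset.mem_product, Finset.mem_Icc] at hp hp'
      simp only [Prod.mk.injEq] at he
      obtain ⟨⟨rfl, rfl⟩, hd⟩ := he
      rw [decide_eq_decide] at hd
      have hs := hp.2.1
      have hs' := hp'.2.1
      have hzz : z = z' := by
        by_cases hz : 0 ≤ z
        · have := hd.mp hz; omega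
        · have h2 : ¬ 0 ≤ z' := fun h => hz (hd.mpr h); omega
      simp [hzz])
  calc (P3 n).card ≤ _ := this
    _ = (2 * n + 1) * (2 * n + 1) * 2 := by
        rw [Finset.card_product, Finset.card_product, card_Icc_int, Finset.card_univ]
        simp

end GeoG1

namespace GeoG1

variable {G : Type*} [Group G]

def evv (a t : G) : L3 → G
  | L3.A => a
  | L3.A' => a⁻¹
  | L3.T => t

def rep (a b t : G) (p : ℤ × ℤ × Bool) : G :=
  a ^ p.1 * (b ^ p.2.1 * (cond p.2.2 t 1))

lemma prod_eq (a b t : G) (hab : a * b = b * a) (ht : t * t = 1) (hconj : t * a * t = b) :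
    ∀ w : List L3, (w.map (evv a t)).prod = rep a b t (nf3 w) := by
  have hsem : SemiconjBy t a b := by
    show t * a = b * t
    rw [← hconj, mul_assoc, ht, mul_one]
  have hsem' : SemiconjBy t b a := by
    show t * b = a * t
    rw [← hconj, ← mul_assoc, ← mul_assoc, ht, one_mul]
  have hcomm : Commute a b := hab
  have Hta : ∀ (i : ℤ) (x : G), t * (a ^ i * x) = b ^ i * (t * x) := fun i x => by
    rw [← mul_assoc, (hsem.zpow_right i).eq, mul_assoc]
  have Htb : ∀ (i : ℤ) (x : G), t * (b ^ i * x) = a ^ i * (t * x) := fun i x => by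
    rw [← mul_assoc, (hsem'.zpow_right i).eq, mul_assoc]
  have Hcom : ∀ (u v : ℤ) (x : G), a ^ u * (b ^ v * x) = b ^ v * (a ^ u * x) := fun u v x => by
    rw [← mul_assoc, (hcomm.zpow_zpow u v).eq, mul_assoc]
  intro w
  induction w with
  | nil => simp [rep]
  | cons c w ih =>
    cases c with
    | A =>
      simp only [List.map_cons, List.prod_cons, ih, rep, nf3_cons_A, evv]
      rw [← mul_assoc, show a * a ^ (nf3 w).1 = a ^ ((nf3 w).1 + 1) from by
        rw [add_comm, zpow_add, zpow_one]]
    | A' =>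
      simp only [List.map_cons, List.prod_cons, ih, rep, nf3_cons_A', evv]
      rw [← mul_assoc, show a⁻¹ * a ^ (nf3 w).1 = a ^ ((nf3 w).1 - 1) from by
        rw [sub_eq_add_neg, add_comm, zpow_add, zpow_neg, zpow_one]]
    | T =>
      simp only [List.map_cons, List.prod_cons, ih, rep, nf3_cons_T, evv]
      rw [Hta, Htb, ← Hcom]
      have hc : t * (cond (nf3 w).2.2 t 1) = cond (!(nf3 w).2.2) t 1 := by
        cases (nf3 w).2.2 <;> simp [ht]
      rw [hc]

lemma free_pair (a b : G) (hfree : ∀ i j : ℤ, a ^ i * b ^ j = 1 → i = 0 ∧ j = 0)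
    {u v u' v' : ℤ} (h : a ^ u * (b ^ v * 1) = a ^ u' * (b ^ v' * 1)) :
    u = u' ∧ v = v' := by
  rw [mul_one, mul_one] at h
  have h4 : a ^ (u - u') = b ^ (v' - v) := by
    rw [sub_eq_add_neg, add_comm u (-u'), zpow_add, zpow_neg, sub_eq_add_neg, zpow_add,
      zpow_neg, inv_mul_eq_iff_eq_mul, ← mul_assoc, ← h, mul_assoc, mul_inv_cancel, mul_one]
  have h5 : a ^ (u - u') * b ^ (v - v') = 1 := by
    rw [h4, ← zpow_add, show v' - v + (v - v') = 0 from by ring, zpow_zero]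
  have h6 := hfree _ _ h5
  omega

lemma rep_inj (a b t : G) (hfree : ∀ i j : ℤ, a ^ i * b ^ j = 1 → i = 0 ∧ j = 0)
    (htH : t ∉ Subgroup.closure {a, b}) :
    ∀ p q : ℤ × ℤ × Bool, rep a b t p = rep a b t q → p = q := by
  have haS : a ∈ Subgroup.closure ({a, b} : Set G) :=
    Subgroup.subset_closure (by simp)
  have hbS : b ∈ Subgroup.closure ({a, b} : Set G) :=
    Subgroup.subset_closure (by simp)
  have hmix : ∀ i j i' j' : ℤ, ¬ (a ^ i * (b ^ j * 1) = a ^ i' * (b ^ j' * t)) := by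
    intro i j i' j' h
    apply htH
    have hexp : t = (b ^ j')⁻¹ * ((a ^ i')⁻¹ * (a ^ i * (b ^ j * 1))) := by
      rw [h]
      group
    rw [hexp]
    have S := Subgroup.closure ({a, b} : Set G)
    exact Subgroup.mul_mem _ (Subgroup.inv_mem _ (Subgroup.zpow_mem _ hbS _))
      (Subgroup.mul_mem _ (Subgroup.inv_mem _ (Subgroup.zpow_mem _ haS _))
        (Subgroup.mul_mem _ (Subgroup.zpow_mem _ haS _)
          (Subgroup.mul_mem _ (Subgroup.zpow_mem _ hbS _) (Subgroup.one_mem _))))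
  rintro ⟨i, j, ε⟩ ⟨i', j', ε'⟩ h
  cases ε <;> cases ε' <;> simp only [rep, Bool.cond_true, Bool.cond_false] at h
  · obtain ⟨rfl, rfl⟩ := free_pair a b hfree h
    rfl
  · exact absurd h (hmix _ _ _ _)
  · exact absurd h.symm (hmix _ _ _ _)
  · rw [← mul_assoc, ← mul_assoc] at h
    have h2 := mul_right_cancel h
    have h3 : a ^ i * (b ^ j * 1) = a ^ i' * (b ^ j' * 1) := by
      rw [mul_one, mul_one]
      exact h2
    obtain ⟨rfl, rfl⟩ := free_pair a b hfree h3
    rfl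

lemma evv_inj (a b t : G) (hfree : ∀ i j : ℤ, a ^ i * b ^ j = 1 → i = 0 ∧ j = 0)
    (htH : t ∉ Subgroup.closure {a, b}) : Function.Injective (evv a t) := by
  have haS : a ∈ Subgroup.closure ({a, b} : Set G) :=
    Subgroup.subset_closure (by simp)
  have haa : a ≠ a⁻¹ := by
    intro he
    have h1 : a ^ (2:ℤ) * b ^ (0:ℤ) = 1 := by
      rw [zpow_zero, mul_one, show (2:ℤ) = 1 + 1 from rfl, zpow_add, zpow_one]
      nth_rewrite 2 [he]
      rw [mul_inv_cancel]
    have := hfree _ _ h1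
    omega
  have hat : a ≠ t := by
    rintro rfl
    exact htH haS
  have hat' : a⁻¹ ≠ t := by
    rintro rfl
    exact htH (Subgroup.inv_mem _ haS)
  intro c c' h
  cases c <;> cases c' <;> first
    | rfl
    | (exfalso; simp only [evv] at h;
       first
         | exact haa h
         | exact haa h.symm
         | exact hat h
         | exact hat h.symm
         | exact hat' h
         | exact hat' h.symm)

lemma exists_list (a t : G) (w : List G) (hw : ∀ c ∈ w, c ∈ ({a, a⁻¹, t} : Set G)) :
    ∃ l : List L3, l.map (evv a t) = w := by
  induction w with
  | nil => exact ⟨[], rfl⟩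
  | cons c w ih =>
    obtain ⟨l, hl⟩ := ih (fun x hx => hw x (List.mem_cons_of_mem _ hx))
    have hc0 := hw c (List.mem_cons_self)
    simp only [Set.mem_insert_iff, Set.mem_singleton_iff] at hc0
    rcases hc0 with hc | hc | hc
    · exact ⟨L3.A :: l, by simp [evv, hl, hc]⟩
    · exact ⟨L3.A' :: l, by simp [evv, hl, hc]⟩
    · exact ⟨L3.T :: l, by simp [evv, hl, hc]⟩

end GeoG1

open GeoG1

/-- In G₁ = ℤ² ⋊ C₂ (with C₂ swapping the basis a, b), characterized abstractly by the
presentation relations together with freeness of ⟨a,b⟩ ≅ ℤ² and t ∉ ⟨a,b⟩, the number of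
geodesics of length n over {a, a⁻¹, t} is 2n² − 2n for n ≥ 5, and the geodesic growth
is polynomial of degree 3. -/
theorem G1_polynomial_geodesic_growth {G : Type*} [Group G] (a b t : G)
    (hab : a * b = b * a) (ht : t * t = 1) (hconj : t * a * t = b)
    (hfree : ∀ i j : ℤ, a ^ i * b ^ j = 1 → i = 0 ∧ j = 0)
    (htH : t ∉ Subgroup.closure {a, b}) :
    (∀ n : ℕ, 5 ≤ n →
      Set.ncard {w : List G | IsGeodesicWord {a, a⁻¹, t} w ∧ w.length = n} =
        2 * n ^ 2 - 2 * n) ∧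
    ∃ c : ℕ, ∀ n : ℕ, 1 ≤ n →
      geodesicGrowth ({a, a⁻¹, t} : Set G) n ≤ c * n ^ 3 := by
  classical
  have hprod := prod_eq a b t hab ht hconj
  have hrinj := rep_inj a b t hfree htH
  have heinj : Function.Injective (evv a t) := evv_inj a b t hfree htH
  have hminj : Function.Injective (List.map (evv a t)) :=
    List.map_injective_iff.mpr heinj
  -- an exact geodesic representative for every normal form
  have hwit : ∀ p : ℤ × ℤ × Bool, ∃ l : List L3, nf3 l = p ∧ l.length = glen p := by
    rintro ⟨i, j, ε⟩
    cases ε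
    · by_cases hj : j = 0
      · subst hj
        refine ⟨blk i, by simp, ?_⟩
        rw [glen_false, if_pos rfl, length_blk]
      · refine ⟨w3 (i, j, 0), by simp, ?_⟩
        rw [glen_false, if_neg hj, length_w3]
        simp
    · exact ⟨w2 (i, j), by simp, by rw [glen_true, length_w2]⟩
  -- geodesic transfer
  have hgeo : ∀ l : List L3,
      IsGeodesicWord ({a, a⁻¹, t} : Set G) (l.map (evv a t)) ↔ l.length = glen (nf3 l) := by
    intro l
    constructor
    · rintro ⟨-, hmin⟩
      obtain ⟨l₀, hl₀, hlen₀⟩ := hwit (nf3 l)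
      have hpe : (l₀.map (evv a t)).prod = (l.map (evv a t)).prod := by
        rw [hprod, hprod, hl₀]
      have := hmin (l₀.map (evv a t)) (by
        intro c hc
        simp only [List.mem_map] at hc
        obtain ⟨x, -, rfl⟩ := hc
        cases x <;> simp [evv]) hpe
      simp only [List.length_map] at this
      have h2 := glen_lower l
      omega
    · intro hl
      constructor
      · intro c hc
        simp only [List.mem_map] at hc
        obtain ⟨x, -, rfl⟩ := hc
        cases x <;> simp [evv]
      · intro w' hw' hpe
        obtain ⟨l', rfl⟩ := exists_list a t w' hw'
        rw [hprod, hprod] at hpe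
        have hnf : nf3 l' = nf3 l := hrinj _ _ hpe
        have h2 := glen_lower l'
        rw [hnf] at h2
        simp only [List.length_map]
        omega
  -- sphere description
  have hsphere : ∀ n : ℕ,
      {w : List G | IsGeodesicWord ({a, a⁻¹, t} : Set G) w ∧ w.length = n}
        = ↑((GeoF n).image (List.map (evv a t))) := by
    intro n
    ext w
    simp only [Set.mem_setOf_eq, Finset.coe_image, Set.mem_image, Finset.mem_coe]
    constructor
    · rintro ⟨hg, hlen⟩
      obtain ⟨l, rfl⟩ := exists_list a t w hg.1
      have hL : l.length = glen (nf3 l) := (hgeo l).mp hg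
      have hln : l.length = n := by simpa using hlen
      exact ⟨l, by rw [← hln]; exact mem_GeoF_of l hL, rfl⟩
    · rintro ⟨l, hl, rfl⟩
      obtain ⟨h1, h2⟩ := GeoF_spec n l hl
      exact ⟨(hgeo l).mpr h2, by simpa using h1⟩
  constructor
  · intro n hn
    rw [hsphere n, Set.ncard_coe_finset, Finset.card_image_of_injective _ hminj, card_GeoF]
    obtain ⟨m, rfl⟩ : ∃ m, n = m + 5 := ⟨n - 5, by omega⟩
    rw [show m + 5 = (m + 5) from rfl]
    have c1 : (P1 (m+5)).card = 2 := card_P1 (m+5) (by omega)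
    have c2 : (P2 (m+5)).card = 4 * (m+4) := card_P2 (m+4) (by omega)
    have c3 : (P3 (m+5)).card = 2 * ((m+3) * (m+3) + (m+3) - 1) := card_P3 (m+3) (by omega)
    rw [c1, c2, c3, pow_two]
    have h : (m+5) * (m+5) = (m+3) * (m+3) + 4 * (m+3) + 4 := by ring
    rw [h]
    have h2 : 0 ≤ (m+3) * (m+3) := Nat.zero_le _
    generalize (m+3) * (m+3) = k at *
    omega
  · refine ⟨60, fun n hn => ?_⟩
    have hset : {w : List G | IsGeodesicWord ({a, a⁻¹, t} : Set G) w ∧ w.length ≤ n}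
        = ↑(((Finset.range (n+1)).biUnion GeoF).image (List.map (evv a t))) := by
      ext w
      simp only [Set.mem_setOf_eq, Finset.coe_image, Set.mem_image, Finset.mem_coe,
        Finset.mem_biUnion, Finset.mem_range]
      constructor
      · rintro ⟨hg, hlen⟩
        obtain ⟨l, rfl⟩ := exists_list a t w hg.1
        have hL : l.length = glen (nf3 l) := (hgeo l).mp hg
        refine ⟨l, ⟨l.length, by simp only [List.length_map] at hlen; omega,
          mem_GeoF_of l hL⟩, rfl⟩
      · rintro ⟨l, ⟨k, hk, hl⟩, rfl⟩
        obtain ⟨h1, h2⟩ := GeoF_spec k l hl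
        exact ⟨(hgeo l).mpr h2, by simp [h1]; omega⟩
    rw [geodesicGrowth, hset, Set.ncard_coe_finset,
      Finset.card_image_of_injective _ hminj]
    calc ((Finset.range (n+1)).biUnion GeoF).card
        ≤ ∑ k ∈ Finset.range (n+1), (GeoF k).card := Finset.card_biUnion_le
      _ ≤ ∑ k ∈ Finset.range (n+1), 30 * (n * n) := by
          apply Finset.sum_le_sum
          intro k hk
          simp only [Finset.mem_range] at hk
          have hk' : 2 * k + 1 ≤ 3 * n := by omega
          have b1 := card_P1_le k
          have b2 := card_P2_le k
          have b3 := card_P3_le k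
          have hle : (2*k+1) * (2*k+1) ≤ (3*n) * (3*n) := Nat.mul_le_mul hk' hk'
          have hle2 : (2*k+1) * (2*k+1) * 2 ≤ (3*n) * (3*n) * 2 :=
            Nat.mul_le_mul_right 2 hle
          rw [card_GeoF]
          have hgoal : (2*k+1) + (2*k+1) * (2*k+1) + (2*k+1) * (2*k+1) * 2 ≤ 30 * (n * n) := by
            have h9 : (3*n) * (3*n) = 9 * (n*n) := by ring
            have h3n : 2*k+1 ≤ 3 * (n*n) := by nlinarith
            rw [h9] at hle hle2
            omega
          omega
      _ = (n+1) * (30 * (n * n)) := by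
          rw [Finset.sum_const, Finset.card_range, smul_eq_mul]
      _ ≤ (2*n) * (30 * (n * n)) := Nat.mul_le_mul_right _ (by omega)
      _ = 60 * n ^ 3 := by ring
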